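/- Let a₁,…,a₅ be positive real numbers with a₃ > a₄² + a₅², and define f(x,y) = x(a₁ + a₂y − a₃x²) and g(x,y) = x(a₄x + a₅y) for x,y ∈ ℝ. Set δ = a₃ − a₄² − a₅² and K₁ = max(a₁, a₂²/(4δ)). Then for all x,y ∈ ℝ: x·f(x,y) + ½g(x,y)² ≤ K₁(1 + x² + y²) − ½a₅²x⁴ + ½a₅²y⁴. -/
import Mathlib

theorem stmt_3 (a₁ a₂ a₃ a₄ a₅ : ℝ)
    (h₁ : 0 < a₁) (h₂ : 0 < a₂) (h₃ : 0 < a₃) (h₄ : 0 < a₄) (h₅ : 0 < a₅)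
    (hcond : a₄ ^ 2 + a₅ ^ 2 < a₃) :
    ∀ x y : ℝ,
      x * (x * (a₁ + a₂ * y - a₃ * x ^ 2)) + (1/2) * (x * (a₄ * x + a₅ * y)) ^ 2
        ≤ (max a₁ (a₂ ^ 2 / (4 * (a₃ - a₄ ^ 2 - a₅ ^ 2)))) * (1 + x ^ 2 + y ^ 2)
          - (1/2) * a₅ ^ 2 * x ^ 4 + (1/2) * a₅ ^ 2 * y ^ 4 := by
  intro x y
  set δ := a₃ - a₄ ^ 2 - a₅ ^ 2 with hδ
  have hδpos : 0 < δ := by simp [hδ]; linarith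
  set K := max a₁ (a₂ ^ 2 / (4 * δ)) with hK
  have hK1 : a₁ ≤ K := le_max_left _ _
  have hK2 : a₂ ^ 2 / (4 * δ) ≤ K := le_max_right _ _
  have hKpos : 0 < K := lt_of_lt_of_le h₁ hK1
  have key : a₂ * x ^ 2 * y - δ * x ^ 4 ≤ a₂ ^ 2 / (4 * δ) * y ^ 2 := by
    have h := sq_nonneg (2 * δ * x ^ 2 - a₂ * y)
    have h4 : (0:ℝ) < 4 * δ := by linarith
    rw [div_mul_eq_mul_div, le_div_iff₀ h4]
    nlinarith
  nlinarith [key, sq_nonneg (a₄ * x ^ 2 - a₅ * x * y), sq_nonneg (x ^ 2 - y ^ 2),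
    mul_le_mul_of_nonneg_right hK2 (sq_nonneg y),
    mul_le_mul_of_nonneg_right hK1 (sq_nonneg x), hKpos.le, mul_pos h₅ h₅]
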